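/- Let φ_1,…,φ_m be unit vectors in (ℂ^d)^{⊗N} forming a complex projective 2-design, with k ≤ N/2 and X a subset of parties with |X| = k. If m_sep of the vectors have pure reduction on X (purity 1) and at least one of the remaining vectors has maximally mixed reduction on X (purity 1/d^k), then m_sep(d^N + 1) ≤ m(d^k + 1). -/

import Mathlib

open Matrix BigOperators Finset Kronecker
open scoped ComplexOrder

noncomputable section

/-- The rank-one projector `|v⟩⟨v|`. -/
def proj {n : Type*} [Fintype n] (v : n → ℂ) : Matrix n n ℂ :=
  Matrix.of fun a b => v a * star (v b)

/-- The inner product `⟨v|w⟩` on `n → ℂ`. -/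
def inner' {n : Type*} [Fintype n] (v w : n → ℂ) : ℂ := ∑ i, star (v i) * w i

/-- A density matrix: positive semidefinite with unit trace. -/
def IsDensity {n : Type*} [Fintype n] [DecidableEq n] (ρ : Matrix n n ℂ) : Prop :=
  ρ.PosSemidef ∧ ρ.trace = 1


/-- The swap operator on `ℂ^n ⊗ ℂ^n`. -/
def swapM (n : Type*) [Fintype n] [DecidableEq n] : Matrix (n × n) (n × n) ℂ :=
  Matrix.of fun p q => if p.1 = q.2 ∧ p.2 = q.1 then 1 else 0

/-- A complex projective 2-design: the averaged two-fold tensor power of the projectors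
equals the normalized projector onto the symmetric subspace, `(I + SWAP)/(D(D+1))`. -/
def TwoDesign {n : Type*} [Fintype n] [DecidableEq n] {m : ℕ} (φ : Fin m → n → ℂ) : Prop :=
  (1/(m:ℂ)) • ∑ j, (proj (φ j)) ⊗ₖ (proj (φ j)) =
    (1/((Fintype.card n : ℂ) * (Fintype.card n + 1))) • (1 + swapM n)


/-- Combine an assignment on a subset `S` of parties with one on its complement. -/
def combine {N d : ℕ} (S : Finset (Fin N)) (x : {i // i ∈ S} → Fin d)
    (z : {i // i ∉ S} → Fin d) : Fin N → Fin d :=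
  fun i => if h : i ∈ S then x ⟨i, h⟩ else z ⟨i, h⟩

/-- Partial trace of a multipartite matrix onto the subset `S` of parties. -/
def reduce {N d : ℕ} (S : Finset (Fin N)) (M : Matrix (Fin N → Fin d) (Fin N → Fin d) ℂ) :
    Matrix ({i // i ∈ S} → Fin d) ({i // i ∈ S} → Fin d) ℂ :=
  Matrix.of fun x y => ∑ z : {i // i ∉ S} → Fin d, M (combine S x z) (combine S y z)

/-- A `k`-uniform pure state: every reduction to `k` parties is maximally mixed. -/
def kUniform {N d : ℕ} (k : ℕ) (v : (Fin N → Fin d) → ℂ) : Prop :=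
  ∀ S : Finset (Fin N), S.card = k → reduce S (proj v) = ((1:ℂ)/(d^k : ℂ)) • 1

/-- A fully separable (product) multipartite pure state. -/
def FullySep {N d : ℕ} (v : (Fin N → Fin d) → ℂ) : Prop :=
  ∃ w : Fin N → Fin d → ℂ, ∀ x, v x = ∏ i, w i (x i)



/-! ### Auxiliary lemmas -/

def combEquiv (N d : ℕ) (S : Finset (Fin N)) :
    ({i // i ∈ S} → Fin d) × ({i // i ∉ S} → Fin d) ≃ (Fin N → Fin d) where
  toFun p := combine S p.1 p.2
  invFun f := (fun i => f i, fun i => f i)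
  left_inv p := by
    refine Prod.ext ?_ ?_ <;> funext i <;> simp [combine, i.2]
  right_inv f := by funext i; simp only [combine]; split <;> rfl

lemma combine_inj {N d : ℕ} (S : Finset (Fin N)) {x y : {i // i ∈ S} → Fin d}
    {z w : {i // i ∉ S} → Fin d} : combine S x z = combine S y w ↔ x = y ∧ z = w := by
  constructor
  · intro h
    have := (combEquiv N d S).injective (a₁ := (x,z)) (a₂ := (y,w)) h
    exact ⟨congrArg Prod.fst this, congrArg Prod.snd this⟩
  · rintro ⟨rfl, rfl⟩; rfl

lemma trace_reduce {N d : ℕ} (S : Finset (Fin N)) (v : (Fin N → Fin d) → ℂ) :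
    (reduce S (proj v)).trace = inner' v v := by
  rw [inner', ← Equiv.sum_comp (combEquiv N d S)]
  rw [Matrix.trace, Fintype.sum_prod_type]
  simp only [reduce, proj, Matrix.diag, Matrix.of_apply, combEquiv, Equiv.coe_fn_mk]
  congr 1; funext x; congr 1; funext z; ring

lemma reduce_herm {N d : ℕ} (S : Finset (Fin N)) (v : (Fin N → Fin d) → ℂ)
    (x y : {i // i ∈ S} → Fin d) :
    reduce S (proj v) y x = starRingEnd ℂ (reduce S (proj v) x y) := by
  simp only [reduce, proj, Matrix.of_apply, map_sum, _root_.map_mul, RingHom.coe_comp]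
  congr 1; funext z
  simp only [RCLike.star_def, Complex.conj_conj]
  ring

/-- The (real) purity of the reduction of `|v⟩⟨v|` to `S`. -/
def purR {N d : ℕ} (S : Finset (Fin N)) (v : (Fin N → Fin d) → ℂ) : ℝ :=
  ∑ x : {i // i ∈ S} → Fin d, ∑ y, Complex.normSq (reduce S (proj v) x y)

lemma trace_sq_reduce' {N d : ℕ} (S : Finset (Fin N)) (v : (Fin N → Fin d) → ℂ) :
    (reduce S (proj v) * reduce S (proj v)).trace = ((purR S v : ℝ) : ℂ) := by
  rw [Matrix.trace, purR]
  push_cast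
  congr 1; funext x
  rw [Matrix.diag, Matrix.mul_apply]
  congr 1; funext y
  rw [reduce_herm S v x y, Complex.mul_conj]

/-- The linear functional extracting the `X`-purity from a two-fold tensor. -/
def Fn {N d : ℕ} (X : Finset (Fin N)) (M : Matrix ((Fin N → Fin d) × (Fin N → Fin d))
    ((Fin N → Fin d) × (Fin N → Fin d)) ℂ) : ℂ :=
  ∑ x : {i // i ∈ X} → Fin d, ∑ y : {i // i ∈ X} → Fin d,
    ∑ z : {i // i ∉ X} → Fin d, ∑ w : {i // i ∉ X} → Fin d,
      M (combine X x z, combine X y w) (combine X y z, combine X x w)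

lemma Fn_smul {N d : ℕ} (X : Finset (Fin N)) (c : ℂ) (M) :
    Fn (d := d) X (c • M) = c * Fn X M := by
  simp [Fn, Matrix.smul_apply, Finset.mul_sum]

lemma Fn_sum {N d : ℕ} (X : Finset (Fin N)) {m : ℕ}
    (M : Fin m → Matrix ((Fin N → Fin d) × (Fin N → Fin d))
      ((Fin N → Fin d) × (Fin N → Fin d)) ℂ) :
    Fn (d := d) X (∑ j, M j) = ∑ j, Fn X (M j) := by
  simp only [Fn, Matrix.sum_apply]
  rw [eq_comm, Finset.sum_comm]
  refine Finset.sum_congr rfl fun x _ => ?_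
  rw [Finset.sum_comm]
  refine Finset.sum_congr rfl fun y _ => ?_
  rw [Finset.sum_comm]
  refine Finset.sum_congr rfl fun z _ => ?_
  rw [Finset.sum_comm]

lemma Fn_add {N d : ℕ} (X : Finset (Fin N)) (A B) :
    Fn (d := d) X (A + B) = Fn X A + Fn X B := by
  simp [Fn, Matrix.add_apply, Finset.sum_add_distrib]

lemma Fn_kron {N d : ℕ} (X : Finset (Fin N)) (v : (Fin N → Fin d) → ℂ) :
    Fn X (proj v ⊗ₖ proj v) = (reduce X (proj v) * reduce X (proj v)).trace := by
  simp only [Fn, Matrix.kroneckerMap_apply, Matrix.trace, Matrix.diag, Matrix.mul_apply,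
    reduce, Matrix.of_apply]
  congr 1; funext x
  congr 1; funext y
  rw [Finset.sum_mul_sum]

lemma Fn_one {N d : ℕ} (X : Finset (Fin N)) : Fn (N := N) (d := d) X 1 =
    (Fintype.card ({i // i ∈ X} → Fin d) : ℂ) * (Fintype.card ({i // i ∉ X} → Fin d))^2 := by
  simp only [Fn, Matrix.one_apply, Prod.mk.injEq]
  have key : ∀ (x y : {i // i ∈ X} → Fin d) (z w : {i // i ∉ X} → Fin d),
      ((combine X x z = combine X y z ∧ combine X y w = combine X x w) ↔ y = x) := by
    intro x y z w
    rw [combine_inj, combine_inj]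
    constructor
    · rintro ⟨⟨rfl, -⟩, -⟩; rfl
    · rintro rfl; simp
  simp only [key]
  simp [Finset.sum_ite_eq, Finset.sum_const, Finset.card_univ, sq]
  try ring

lemma Fn_swap {N d : ℕ} (X : Finset (Fin N)) : Fn (N := N) (d := d) X (swapM _) =
    (Fintype.card ({i // i ∈ X} → Fin d) : ℂ)^2 * (Fintype.card ({i // i ∉ X} → Fin d)) := by
  simp only [Fn, swapM, Matrix.of_apply]
  have key : ∀ (x y : {i // i ∈ X} → Fin d) (z w : {i // i ∉ X} → Fin d),
      ((combine X x z = combine X x w ∧ combine X y w = combine X y z) ↔ w = z) := by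
    intro x y z w
    rw [combine_inj, combine_inj]
    constructor
    · rintro ⟨⟨-, rfl⟩, -⟩; rfl
    · rintro rfl; simp
  simp only [key]
  simp [Finset.sum_ite_eq, Finset.sum_const, Finset.card_univ, sq]
  try ring

lemma cardA {N d : ℕ} (X : Finset (Fin N)) :
    Fintype.card ({i // i ∈ X} → Fin d) = d ^ X.card := by
  rw [Fintype.card_fun, Fintype.card_fin, Fintype.card_coe]

lemma cardB {N d : ℕ} (X : Finset (Fin N)) :
    Fintype.card ({i // i ∉ X} → Fin d) = d ^ (N - X.card) := by
  rw [Fintype.card_fun, Fintype.card_fin]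
  congr 1
  rw [Fintype.card_subtype_compl, Fintype.card_fin, Fintype.card_coe]

lemma purity_lb' {N d : ℕ} (X : Finset (Fin N)) (v : (Fin N → Fin d) → ℂ)
    (hv : inner' v v = 1) :
    1 ≤ (Fintype.card ({i // i ∈ X} → Fin d) : ℝ) * purR X v := by
  set r := reduce X (proj v) with hr
  set q : ({i // i ∈ X} → Fin d) → ℝ := fun x => (r x x).re with hq
  have hdiag : ∀ x, r x x = ((q x : ℝ) : ℂ) := by
    intro x
    have : r x x = ((∑ z, Complex.normSq (v (combine X x z)) : ℝ) : ℂ) := by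
      simp only [hr, reduce, proj, Matrix.of_apply]
      push_cast
      refine Finset.sum_congr rfl fun z _ => ?_
      rw [RCLike.star_def, Complex.mul_conj]
    rw [this]
    simp [hq, this]
  have hqsum : ∑ x, q x = 1 := by
    have h1 : r.trace = 1 := by rw [hr, trace_reduce, hv]
    have h2 : r.trace = ((∑ x, q x : ℝ) : ℂ) := by
      rw [Matrix.trace]
      push_cast
      exact Finset.sum_congr rfl fun x _ => hdiag x
    rw [h2] at h1
    exact_mod_cast h1
  have step1 : ∑ x, (q x)^2 ≤ purR X v := by
    rw [purR]
    refine Finset.sum_le_sum fun x _ => ?_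
    have : (q x)^2 = Complex.normSq (r x x) := by
      rw [hdiag x, Complex.normSq_ofReal, sq]
    rw [this]
    exact Finset.single_le_sum (fun y _ => Complex.normSq_nonneg _) (Finset.mem_univ x)
  have step2 : (1:ℝ) ≤ (Fintype.card ({i // i ∈ X} → Fin d) : ℝ) * ∑ x, (q x)^2 := by
    have := sq_sum_le_card_mul_sum_sq (s := Finset.univ) (f := q)
    rw [hqsum, Finset.card_univ] at this
    simpa using this
  calc (1:ℝ) ≤ _ := step2
    _ ≤ _ := by
        apply mul_le_mul_of_nonneg_left step1 (by positivity)

/-- Proposition 4 (bound): if a 2-design has `m_sep` vectors with pure reduction on `X` and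
at least one remaining vector has maximally mixed reduction on `X`, then
`m_sep(d^N + 1) ≤ m(d^k + 1)`. -/
theorem stmt_7 (N d k m : ℕ) (hd : 2 ≤ d) (hm : 0 < m) (hk : 1 ≤ k) (hk2 : 2 * k ≤ N)
    (φ : Fin m → (Fin N → Fin d) → ℂ) (hunit : ∀ j, inner' (φ j) (φ j) = 1)
    (hdes : TwoDesign φ)
    (X : Finset (Fin N)) (hX : X.card = k)
    (Sep : Finset (Fin m))
    (hpure : ∀ j ∈ Sep, (reduce X (proj (φ j)) * reduce X (proj (φ j))).trace = 1)
    (hmix : ∃ j, j ∉ Sep ∧ reduce X (proj (φ j)) = ((1:ℂ)/((d:ℂ)^k)) • 1) :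
    Sep.card * (d^N + 1) ≤ m * (d^k + 1) := by
  classical
  have hd1 : (1:ℝ) < (d:ℝ) := by exact_mod_cast hd.trans_lt' one_lt_two
  have ha2 : (2:ℝ) ≤ (d:ℝ)^k := by
    calc (2:ℝ) = 2^1 := by norm_num
    _ ≤ (d:ℝ)^1 := by gcongr; exact_mod_cast hd
    _ ≤ (d:ℝ)^k := pow_le_pow_right₀ (by linarith) hk
  have hb1 : (1:ℝ) ≤ (d:ℝ)^(N-k) := one_le_pow₀ (by linarith)
  have ha0 : (0:ℝ) < (d:ℝ)^k := by linarith
  have hb0 : (0:ℝ) < (d:ℝ)^(N-k) := by linarith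
  have hab : (d:ℝ)^N = (d:ℝ)^k * (d:ℝ)^(N-k) := by
    rw [← pow_add]; congr 1; omega
  have hM0 : (0:ℝ) < (m:ℝ) := by exact_mod_cast hm
  -- design identity
  unfold TwoDesign at hdes
  have hdes' := congrArg (Fn X) hdes
  rw [Fn_smul, Fn_smul, Fn_sum, Fn_add, Fn_one, Fn_swap] at hdes'
  simp only [Fn_kron, trace_sq_reduce'] at hdes'
  rw [cardA, cardB, hX] at hdes'
  rw [Fintype.card_fun, Fintype.card_fin, Fintype.card_fin] at hdes'
  rw [← Complex.ofReal_sum] at hdes'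
  have hreal : (1/(m:ℝ)) * (∑ j, purR X (φ j)) =
      (1/(((d:ℝ)^k*(d:ℝ)^(N-k)) * ((d:ℝ)^k*(d:ℝ)^(N-k) + 1))) *
        ((d:ℝ)^k * ((d:ℝ)^(N-k))^2 + ((d:ℝ)^k)^2 * (d:ℝ)^(N-k)) := by
    rw [← hab]
    apply Complex.ofReal_injective
    push_cast at hdes' ⊢
    exact hdes'
  set a : ℝ := (d:ℝ)^k
  set b : ℝ := (d:ℝ)^(N-k)
  set M : ℝ := (m:ℝ)
  set s : ℝ := ((Sep.card : ℕ) : ℝ) with hs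
  set P : ℝ := ∑ j, purR X (φ j) with hP
  have hE : P * ((a*b) * (a*b+1)) = M * (a * b^2 + a^2 * b) := by
    have h1 : (a*b)*(a*b+1) ≠ 0 := by positivity
    have h2 : M ≠ 0 := ne_of_gt hM0
    field_simp at hreal
    linear_combination (a * b) * hreal
  -- bounds
  have hub : ∀ j ∈ Sep, purR X (φ j) = 1 := by
    intro j hj
    have h := hpure j hj
    rw [trace_sq_reduce'] at h
    exact_mod_cast h
  have hlb : ∀ j, 1 ≤ a * purR X (φ j) := by
    intro j
    have h := purity_lb' X (φ j) (hunit j)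
    rw [cardA, hX] at h
    calc (1:ℝ) ≤ _ := h
      _ = a * purR X (φ j) := by push_cast; ring
  have hsm : Sep.card ≤ m := by
    simpa using Finset.card_le_card (Finset.subset_univ Sep)
  have hS' : s * a + (M - s) ≤ a * P := by
    have h₁ : ∑ j ∈ Sep, purR X (φ j) = s := by
      rw [Finset.sum_congr rfl hub, Finset.sum_const, hs]
      simp
    have hcompl : ((Sepᶜ : Finset (Fin m)).card : ℝ) = M - s := by
      rw [Finset.card_compl, Fintype.card_fin]
      push_cast [hsm]
      ring
    have h₂ : M - s ≤ ∑ j ∈ Sepᶜ, a * purR X (φ j) := by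
      rw [← hcompl]
      calc ((Sepᶜ.card : ℝ)) = ∑ j ∈ Sepᶜ, (1:ℝ) := by simp
        _ ≤ ∑ j ∈ Sepᶜ, a * purR X (φ j) := Finset.sum_le_sum fun j _ => hlb j
    rw [← Finset.mul_sum] at h₂
    have h₄ : P = ∑ j ∈ Sep, purR X (φ j) + ∑ j ∈ Sepᶜ, purR X (φ j) := by
      rw [hP, ← Finset.sum_add_sum_compl Sep]
    rw [h₄, mul_add, h₁]
    linarith
  have hS'' := mul_le_mul_of_nonneg_right hS' (show (0:ℝ) ≤ b*(a*b+1) by positivity)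
  have hE' : (a * P) * (b*(a*b+1)) = M * (a*a*b + a*b*b) := by
    linear_combination hE
  have h3 : (s * a + (M - s)) * (b*(a*b+1)) ≤ M * (a*a*b + a*b*b) := by
    rw [← hE']; exact hS''
  have h5 : ((a-1) * (s*(a*b+1))) * b ≤ ((a-1) * (M*(a+1))) * b := by nlinarith [h3]
  have h6 : (a-1) * (s*(a*b+1)) ≤ (a-1) * (M*(a+1)) := le_of_mul_le_mul_right h5 hb0
  have key : s*(a*b+1) ≤ M*(a+1) := le_of_mul_le_mul_left h6 (by linarith)
  have final : (Sep.card : ℝ) * ((d:ℝ)^N + 1) ≤ (m:ℝ) * ((d:ℝ)^k + 1) := by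
    rw [hab]; exact key
  exact_mod_cast final
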